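/- Let ψ be a k-form on an n-dimensional inner product space V, and let g(t) be a smooth family of inner products on V with g(0) = g and (d/dt)|_{t=0} g(t) = h. Then (d/dt)|_{t=0} ⟨ψ,ψ⟩_{g(t)} = −⟨h, Σ_{i,j} ⟨ι_{e_i}ψ, ι_{e_j}ψ⟩_g ω^i ⊗ ω^j⟩_g, where {e_i} is a g-orthonormal basis with dual basis {ω^i}, ⟨·,·⟩_{g(t)} is the inner product induced by g(t) on Λ^k V*, and the right-hand side pairing of symmetric 2-tensors is taken with respect to g. -/

import Mathlib

open Matrix

noncomputable section

def IsAltForm5 (n k : ℕ) (ψ : (Fin k → Fin n) → ℝ) : Prop :=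
  ∀ (σ : Equiv.Perm (Fin k)) (t : Fin k → Fin n),
    ψ (t ∘ σ) = (Equiv.Perm.sign σ : ℤ) * ψ t

def ins5 {n k : ℕ} (hk : 0 < k) (i : Fin n) (j : Fin (k - 1) → Fin n) : Fin k → Fin n :=
  fun a => Fin.cons (α := fun _ => Fin n) i j (Fin.cast (Nat.succ_pred_eq_of_pos hk).symm a)

/-- the inner product `⟨ψ,ψ⟩_G` on `Λ^k V*` induced by the inner product on `V` whose
matrix in the fixed basis is `G` (its inverse `G⁻¹` is the induced matrix on `V*`):
`⟨ψ,ψ⟩_G = (k!)⁻¹ Σ_{I,J} ψ_I ψ_J Π_r (G⁻¹)_{I_r J_r}`. -/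
def innerG5 {n k : ℕ} (G : Matrix (Fin n) (Fin n) ℝ) (ψ : (Fin k → Fin n) → ℝ) : ℝ :=
  (k.factorial : ℝ)⁻¹ * ∑ I : Fin k → Fin n, ∑ J : Fin k → Fin n,
    ψ I * ψ J * ∏ r : Fin k, G⁻¹ (I r) (J r)


lemma det_diffAt {n : ℕ} (A : ℝ → Matrix (Fin n) (Fin n) ℝ)
    (hA : ∀ i j, DifferentiableAt ℝ (fun t => A t i j) 0) :
    DifferentiableAt ℝ (fun t => (A t).det) 0 := by
  simp only [Matrix.det_apply']
  apply DifferentiableAt.fun_sum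
  intro σ _
  exact ((DifferentiableAt.fun_finsetProd (u := Finset.univ)
    (f := fun i t => A t (σ i) i) (fun i _ => hA (σ i) i)).const_mul _)

lemma adjugate_diffAt {n : ℕ} (A : ℝ → Matrix (Fin n) (Fin n) ℝ)
    (hA : ∀ i j, DifferentiableAt ℝ (fun t => A t i j) 0) (i j : Fin n) :
    DifferentiableAt ℝ (fun t => (A t).adjugate i j) 0 := by
  simp only [Matrix.adjugate_apply]
  apply det_diffAt
  intro a b
  rcases eq_or_ne a j with rfl | hne
  · simp only [Matrix.updateRow_self]
    exact differentiableAt_const _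
  · simp only [Matrix.updateRow_ne hne]
    exact hA a b

lemma inv_diffAt {n : ℕ} (A : ℝ → Matrix (Fin n) (Fin n) ℝ)
    (hA : ∀ i j, DifferentiableAt ℝ (fun t => A t i j) 0)
    (hdet : (A 0).det ≠ 0) (i j : Fin n) :
    DifferentiableAt ℝ (fun t => (A t)⁻¹ i j) 0 := by
  have heq : (fun t => (A t)⁻¹ i j) = fun t => ((A t).det)⁻¹ * (A t).adjugate i j := by
    funext t
    rw [Matrix.inv_def, Matrix.smul_apply, Ring.inverse_eq_inv, smul_eq_mul]
  rw [heq]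
  exact ((det_diffAt A hA).inv hdet).mul (adjugate_diffAt A hA i j)

lemma ins5_z {n k : ℕ} (hk : 0 < k) (i : Fin n) (J : Fin (k-1) → Fin n) :
    ins5 hk i J ⟨0, hk⟩ = i := by
  have : (Fin.cast (Nat.succ_pred_eq_of_pos hk).symm (⟨0, hk⟩ : Fin k)) = 0 := by
    apply Fin.ext; simp
  rw [ins5, this, Fin.cons_zero]

lemma ins5_succ {n k : ℕ} (hk : 0 < k) (i : Fin n) (J : Fin (k-1) → Fin n) (m : Fin (k-1)) :
    ins5 hk i J (Fin.cast (Nat.succ_pred_eq_of_pos hk) m.succ) = J m := by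
  have : (Fin.cast (Nat.succ_pred_eq_of_pos hk).symm
      (Fin.cast (Nat.succ_pred_eq_of_pos hk) m.succ)) = m.succ := by
    apply Fin.ext; simp
  rw [ins5, this, Fin.cons_succ]

def insEquiv {n k : ℕ} (hk : 0 < k) : (Fin n × (Fin (k-1) → Fin n)) ≃ (Fin k → Fin n) where
  toFun p := ins5 hk p.1 p.2
  invFun I := (I ⟨0, hk⟩, fun m => I (Fin.cast (Nat.succ_pred_eq_of_pos hk) m.succ))
  left_inv := by
    rintro ⟨i, J⟩
    refine Prod.ext (ins5_z hk i J) (funext fun m => ins5_succ hk i J m)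
  right_inv := by
    intro I
    funext a
    show ins5 hk (I ⟨0, hk⟩) (fun m => I (Fin.cast (Nat.succ_pred_eq_of_pos hk) m.succ)) a = I a
    rcases Fin.eq_zero_or_eq_succ (Fin.cast (Nat.succ_pred_eq_of_pos hk).symm a) with h0 | ⟨m, hm⟩
    · have ha : a = ⟨0, hk⟩ := by
        apply Fin.ext
        have := congrArg Fin.val h0
        simpa using this
      rw [show ins5 hk (I ⟨0,hk⟩) (fun m => I (Fin.cast (Nat.succ_pred_eq_of_pos hk) m.succ)) a = Fin.cons (α := fun _ => Fin n) (I ⟨0,hk⟩) (fun m => I (Fin.cast (Nat.succ_pred_eq_of_pos hk) m.succ)) (Fin.cast (Nat.succ_pred_eq_of_pos hk).symm a) from rfl, h0, Fin.cons_zero, ha]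
    · have ha : a = Fin.cast (Nat.succ_pred_eq_of_pos hk) m.succ := by
        apply Fin.ext
        have := congrArg Fin.val hm
        simpa using this
      rw [show ins5 hk (I ⟨0,hk⟩) (fun m => I (Fin.cast (Nat.succ_pred_eq_of_pos hk) m.succ)) a = Fin.cons (α := fun _ => Fin n) (I ⟨0,hk⟩) (fun m => I (Fin.cast (Nat.succ_pred_eq_of_pos hk) m.succ)) (Fin.cast (Nat.succ_pred_eq_of_pos hk).symm a) from rfl, hm, Fin.cons_succ, ha]

lemma exists_succ {k : ℕ} (hk : 0 < k) (s : Fin k) (hs : s ≠ ⟨0, hk⟩) :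
    ∃ m : Fin (k-1), s = Fin.cast (Nat.succ_pred_eq_of_pos hk) m.succ := by
  rcases Fin.eq_zero_or_eq_succ (Fin.cast (Nat.succ_pred_eq_of_pos hk).symm s) with h0 | ⟨m, hm⟩
  · exact absurd (Fin.ext (by simpa using congrArg Fin.val h0)) hs
  · exact ⟨m, Fin.ext (by simpa using congrArg Fin.val hm)⟩

lemma prod_one_erase {n k : ℕ} (hk : 0 < k) (i j : Fin n)
    (J K : Fin (k-1) → Fin n) :
    (∏ s ∈ Finset.univ.erase (⟨0, hk⟩ : Fin k),
      (1 : Matrix (Fin n) (Fin n) ℝ) (ins5 hk i J s) (ins5 hk j K s))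
    = if J = K then 1 else 0 := by
  have hone : ∀ a b : Fin n, (1 : Matrix (Fin n) (Fin n) ℝ) a b = if a = b then 1 else 0 :=
    fun a b => Matrix.one_apply
  simp only [hone]
  rw [Finset.prod_boole]
  congr 1
  apply propext
  constructor
  · intro H
    funext m
    have hmem : Fin.cast (Nat.succ_pred_eq_of_pos hk) m.succ ∈
        Finset.univ.erase (⟨0, hk⟩ : Fin k) := by
      refine Finset.mem_erase.mpr ⟨?_, Finset.mem_univ _⟩
      intro hcontra
      have := congrArg Fin.val hcontra
      simp at this
    have := H _ hmem
    rwa [ins5_succ, ins5_succ] at this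
  · rintro rfl s hs
    obtain ⟨m, rfl⟩ := exists_succ hk s (Finset.mem_erase.mp hs).1
    rw [ins5_succ, ins5_succ]

lemma fixed_z {n k : ℕ} (hk : 0 < k) (ψ : (Fin k → Fin n) → ℝ)
    (h : Matrix (Fin n) (Fin n) ℝ) :
    ∑ I : Fin k → Fin n, ∑ J : Fin k → Fin n, ψ I * ψ J *
      ((∏ s ∈ Finset.univ.erase (⟨0, hk⟩ : Fin k),
          (1 : Matrix (Fin n) (Fin n) ℝ) (I s) (J s))
        * h (I ⟨0, hk⟩) (J ⟨0, hk⟩))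
    = ∑ i : Fin n, ∑ j : Fin n, h i j * ∑ J : Fin (k-1) → Fin n,
        ψ (ins5 hk i J) * ψ (ins5 hk j J) := by
  rw [← Equiv.sum_comp (insEquiv hk) (fun I => ∑ J : Fin k → Fin n, ψ I * ψ J *
      ((∏ s ∈ Finset.univ.erase (⟨0, hk⟩ : Fin k),
          (1 : Matrix (Fin n) (Fin n) ℝ) (I s) (J s))
        * h (I ⟨0, hk⟩) (J ⟨0, hk⟩)))]
  have step1 : ∀ p : Fin n × (Fin (k-1) → Fin n),
      (∑ J : Fin k → Fin n, ψ (insEquiv hk p) * ψ J *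
        ((∏ s ∈ Finset.univ.erase (⟨0, hk⟩ : Fin k),
            (1 : Matrix (Fin n) (Fin n) ℝ) (insEquiv hk p s) (J s))
          * h (insEquiv hk p ⟨0, hk⟩) (J ⟨0, hk⟩)))
      = ∑ q : Fin n × (Fin (k-1) → Fin n),
          ψ (ins5 hk p.1 p.2) * ψ (ins5 hk q.1 q.2) *
            ((if p.2 = q.2 then (1:ℝ) else 0) * h p.1 q.1) := by
    intro p
    rw [← Equiv.sum_comp (insEquiv hk) (fun J => ψ (insEquiv hk p) * ψ J *
        ((∏ s ∈ Finset.univ.erase (⟨0, hk⟩ : Fin k),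
            (1 : Matrix (Fin n) (Fin n) ℝ) (insEquiv hk p s) (J s))
          * h (insEquiv hk p ⟨0, hk⟩) (J ⟨0, hk⟩)))]
    refine Finset.sum_congr rfl fun q _ => ?_
    show ψ (ins5 hk p.1 p.2) * ψ (ins5 hk q.1 q.2) * _ = _
    rw [show (insEquiv hk) p = ins5 hk p.1 p.2 from rfl,
        show (insEquiv hk) q = ins5 hk q.1 q.2 from rfl,
        prod_one_erase, ins5_z, ins5_z]
  simp only [step1]
  rw [Fintype.sum_prod_type]
  simp only [Fintype.sum_prod_type]
  refine Finset.sum_congr rfl fun i _ => ?_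
  rw [Finset.sum_comm]
  refine Finset.sum_congr rfl fun j _ => ?_
  rw [Finset.mul_sum]
  refine Finset.sum_congr rfl fun J' _ => ?_
  simp only [mul_ite, ite_mul, one_mul, mul_one, zero_mul, mul_zero,
    Finset.sum_ite_eq, Finset.mem_univ, if_true]
  ring

lemma sum2_comp {α M : Type*} [Fintype α] [AddCommMonoid M] (e : α ≃ α) (F : α → α → M) :
    ∑ I, ∑ J, F (e I) (e J) = ∑ I, ∑ J, F I J := by
  calc ∑ I, ∑ J, F (e I) (e J) = ∑ I, ∑ J, F (e I) J := by
        refine Finset.sum_congr rfl fun I _ => ?_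
        exact Fintype.sum_equiv e _ _ (fun J => rfl)
    _ = ∑ I, ∑ J, F I J := Fintype.sum_equiv e _ _ (fun I => rfl)

lemma fixed_r {n k : ℕ} (hk : 0 < k) (ψ : (Fin k → Fin n) → ℝ)
    (halt : IsAltForm5 n k ψ) (h : Matrix (Fin n) (Fin n) ℝ) (r : Fin k) :
    ∑ I : Fin k → Fin n, ∑ J : Fin k → Fin n, ψ I * ψ J *
      ((∏ s ∈ Finset.univ.erase r, (1 : Matrix (Fin n) (Fin n) ℝ) (I s) (J s))
        * h (I r) (J r))
    = ∑ I : Fin k → Fin n, ∑ J : Fin k → Fin n, ψ I * ψ J *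
      ((∏ s ∈ Finset.univ.erase (⟨0, hk⟩ : Fin k),
          (1 : Matrix (Fin n) (Fin n) ℝ) (I s) (J s))
        * h (I ⟨0, hk⟩) (J ⟨0, hk⟩)) := by
  set z : Fin k := ⟨0, hk⟩ with hz
  set σ : Equiv.Perm (Fin k) := Equiv.swap z r with hσ
  set E : (Fin k → Fin n) ≃ (Fin k → Fin n) :=
    Equiv.arrowCongr σ (Equiv.refl (Fin n)) with hE
  have hEapp : ∀ (I : Fin k → Fin n), E I = I ∘ σ := by
    intro I
    funext s
    simp only [hE, Equiv.arrowCongr_apply, Equiv.coe_refl, Function.comp_apply,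
      Function.comp, id_eq]
    rw [hσ, Equiv.symm_swap]
  have hσr : σ r = z := Equiv.swap_apply_right z r
  have hσz : σ z = r := Equiv.swap_apply_left z r
  have hc : ∀ I J : Fin k → Fin n, ψ (E I) * ψ (E J) = ψ I * ψ J := by
    intro I J
    rw [hEapp, hEapp, halt σ I, halt σ J]
    rcases Int.units_eq_one_or (Equiv.Perm.sign σ) with h1 | h1 <;>
      simp [h1] <;> ring
  have hprod : ∀ I J : Fin k → Fin n,
      (∏ s ∈ Finset.univ.erase r,
        (1 : Matrix (Fin n) (Fin n) ℝ) (I (σ s)) (J (σ s)))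
      = ∏ s ∈ Finset.univ.erase z,
          (1 : Matrix (Fin n) (Fin n) ℝ) (I s) (J s) := by
    intro I J
    refine Finset.prod_bij' (fun a _ => σ a) (fun b _ => σ b) ?_ ?_ ?_ ?_ ?_
    · intro a ha
      refine Finset.mem_erase.mpr ⟨?_, Finset.mem_univ _⟩
      intro hcon
      have hcon' : σ a = z := hcon
      have : a = r := σ.injective (by rw [hcon', hσr])
      exact (Finset.mem_erase.mp ha).1 this
    · intro b hb
      refine Finset.mem_erase.mpr ⟨?_, Finset.mem_univ _⟩
      intro hcon
      have hcon' : σ b = r := hcon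
      have : b = z := σ.injective (by rw [hcon', hσz])
      exact (Finset.mem_erase.mp hb).1 this
    · intro a _
      show σ (σ a) = a
      rw [hσ, Equiv.swap_apply_self]
    · intro b _
      show σ (σ b) = b
      rw [hσ, Equiv.swap_apply_self]
    · intro a _; rfl
  have hpoint : ∀ I J : Fin k → Fin n,
      ψ (E I) * ψ (E J) *
        ((∏ s ∈ Finset.univ.erase r,
            (1 : Matrix (Fin n) (Fin n) ℝ) (E I s) (E J s))
          * h (E I r) (E J r))
      = ψ I * ψ J *
        ((∏ s ∈ Finset.univ.erase z,
            (1 : Matrix (Fin n) (Fin n) ℝ) (I s) (J s))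
          * h (I z) (J z)) := by
    intro I J
    rw [hc]
    rw [hEapp I, hEapp J]
    rw [show (∏ s ∈ Finset.univ.erase r,
        (1 : Matrix (Fin n) (Fin n) ℝ) ((I ∘ ⇑σ) s) ((J ∘ ⇑σ) s))
        = ∏ s ∈ Finset.univ.erase z, (1 : Matrix (Fin n) (Fin n) ℝ) (I s) (J s) from
      (Finset.prod_congr rfl fun s _ => rfl).trans (hprod I J)]
    simp only [Function.comp_apply, hσr]
  calc
    ∑ I : Fin k → Fin n, ∑ J : Fin k → Fin n, ψ I * ψ J *
      ((∏ s ∈ Finset.univ.erase r, (1 : Matrix (Fin n) (Fin n) ℝ) (I s) (J s))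
        * h (I r) (J r))
    = ∑ I : Fin k → Fin n, ∑ J : Fin k → Fin n, ψ (E I) * ψ (E J) *
      ((∏ s ∈ Finset.univ.erase r,
          (1 : Matrix (Fin n) (Fin n) ℝ) (E I s) (E J s))
        * h (E I r) (E J r)) :=
      (sum2_comp E (fun I J => ψ I * ψ J *
        ((∏ s ∈ Finset.univ.erase r,
            (1 : Matrix (Fin n) (Fin n) ℝ) (I s) (J s))
          * h (I r) (J r)))).symm
    _ = _ := Finset.sum_congr rfl fun I _ => Finset.sum_congr rfl fun J _ => hpoint I J

lemma key_alg {n k : ℕ} (hk : 0 < k) (ψ : (Fin k → Fin n) → ℝ)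
    (halt : IsAltForm5 n k ψ) (h : Matrix (Fin n) (Fin n) ℝ) :
    (k.factorial : ℝ)⁻¹ * ∑ I : Fin k → Fin n, ∑ J : Fin k → Fin n, ψ I * ψ J *
      (∑ r : Fin k, (∏ s ∈ Finset.univ.erase r,
        (1 : Matrix (Fin n) (Fin n) ℝ) (I s) (J s)) * (-h (I r) (J r)))
    = -∑ i : Fin n, ∑ j : Fin n, h i j * (((k-1).factorial : ℝ)⁻¹ *
        ∑ J : Fin (k-1) → Fin n, ψ (ins5 hk i J) * ψ (ins5 hk j J)) := by
  have hS : ∀ r : Fin k,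
      ∑ I : Fin k → Fin n, ∑ J : Fin k → Fin n, ψ I * ψ J *
        ((∏ s ∈ Finset.univ.erase r, (1 : Matrix (Fin n) (Fin n) ℝ) (I s) (J s))
          * h (I r) (J r))
      = ∑ i : Fin n, ∑ j : Fin n, h i j * ∑ J : Fin (k-1) → Fin n,
          ψ (ins5 hk i J) * ψ (ins5 hk j J) :=
    fun r => (fixed_r hk ψ halt h r).trans (fixed_z hk ψ h)
  set S := ∑ i : Fin n, ∑ j : Fin n, h i j * ∑ J : Fin (k-1) → Fin n,
      ψ (ins5 hk i J) * ψ (ins5 hk j J) with hSdef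
  have step : ∑ I : Fin k → Fin n, ∑ J : Fin k → Fin n, ψ I * ψ J *
      (∑ r : Fin k, (∏ s ∈ Finset.univ.erase r,
        (1 : Matrix (Fin n) (Fin n) ℝ) (I s) (J s)) * (-h (I r) (J r)))
      = -((k : ℝ) * S) := by
    calc
      ∑ I : Fin k → Fin n, ∑ J : Fin k → Fin n, ψ I * ψ J *
        (∑ r : Fin k, (∏ s ∈ Finset.univ.erase r,
          (1 : Matrix (Fin n) (Fin n) ℝ) (I s) (J s)) * (-h (I r) (J r)))
      = ∑ I : Fin k → Fin n, ∑ J : Fin k → Fin n, ∑ r : Fin k,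
          -(ψ I * ψ J * ((∏ s ∈ Finset.univ.erase r,
            (1 : Matrix (Fin n) (Fin n) ℝ) (I s) (J s)) * h (I r) (J r))) := by
        refine Finset.sum_congr rfl fun I _ => Finset.sum_congr rfl fun J _ => ?_
        rw [Finset.mul_sum]
        exact Finset.sum_congr rfl fun r _ => by ring
      _ = ∑ r : Fin k, ∑ I : Fin k → Fin n, ∑ J : Fin k → Fin n,
          -(ψ I * ψ J * ((∏ s ∈ Finset.univ.erase r,
            (1 : Matrix (Fin n) (Fin n) ℝ) (I s) (J s)) * h (I r) (J r))) := by
        rw [show (∑ I : Fin k → Fin n, ∑ J : Fin k → Fin n, ∑ r : Fin k,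
          -(ψ I * ψ J * ((∏ s ∈ Finset.univ.erase r,
            (1 : Matrix (Fin n) (Fin n) ℝ) (I s) (J s)) * h (I r) (J r))))
          = ∑ I : Fin k → Fin n, ∑ r : Fin k, ∑ J : Fin k → Fin n,
          -(ψ I * ψ J * ((∏ s ∈ Finset.univ.erase r,
            (1 : Matrix (Fin n) (Fin n) ℝ) (I s) (J s)) * h (I r) (J r))) from
          Finset.sum_congr rfl fun I _ => Finset.sum_comm]
        exact Finset.sum_comm
      _ = ∑ r : Fin k, -S := by
        refine Finset.sum_congr rfl fun r _ => ?_
        rw [← hS r]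
        simp [Finset.sum_neg_distrib]
      _ = -((k : ℝ) * S) := by
        rw [Finset.sum_const]
        simp [mul_comm]
  rw [step]
  have hfact : (k.factorial : ℝ) = (k : ℝ) * ((k-1).factorial : ℝ) := by
    have : k.factorial = k * (k-1).factorial := by
      cases k with
      | zero => exact absurd hk (lt_irrefl 0)
      | succ m => simp [Nat.factorial_succ]
    rw [this]; push_cast; ring
  have hRHS : ∑ i : Fin n, ∑ j : Fin n, h i j * (((k-1).factorial : ℝ)⁻¹ *
      ∑ J : Fin (k-1) → Fin n, ψ (ins5 hk i J) * ψ (ins5 hk j J))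
      = ((k-1).factorial : ℝ)⁻¹ * S := by
    rw [hSdef, Finset.mul_sum]
    refine Finset.sum_congr rfl fun i _ => ?_
    rw [Finset.mul_sum]
    exact Finset.sum_congr rfl fun j _ => by ring
  rw [hRHS, hfact]
  have hk' : (k : ℝ) ≠ 0 := Nat.cast_ne_zero.mpr hk.ne'
  have hf' : ((k-1).factorial : ℝ) ≠ 0 := Nat.cast_ne_zero.mpr (Nat.factorial_ne_zero _)
  field_simp

/-- first variation of `⟨ψ,ψ⟩_{g(t)}` under a variation of the metric.
The components are taken in a `g`-orthonormal basis (so `g(0) = 1` as a matrix), and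
`(d/dt)|₀ ⟨ψ,ψ⟩_{g(t)} = −⟨h, Σ_{i,j} ⟨ι_{eᵢ}ψ, ι_{eⱼ}ψ⟩ ωⁱ⊗ωʲ⟩
  = −Σ_{i,j} h_{ij} ⟨ι_{eᵢ}ψ, ι_{eⱼ}ψ⟩`. -/
theorem stmt_5 (n k : ℕ) (hk : 0 < k) (ψ : (Fin k → Fin n) → ℝ)
    (halt : IsAltForm5 n k ψ)
    (g : ℝ → Matrix (Fin n) (Fin n) ℝ) (h : Matrix (Fin n) (Fin n) ℝ)
    (hg0 : g 0 = 1) (hgsym : ∀ t, (g t).IsSymm) (hgpos : ∀ t, (g t).PosDef)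
    (hgderiv : ∀ i j, HasDerivAt (fun t => g t i j) (h i j) 0) :
    HasDerivAt (fun t => innerG5 (g t) ψ)
      (-∑ i : Fin n, ∑ j : Fin n, h i j *
        (((k - 1).factorial : ℝ)⁻¹ *
          ∑ J : Fin (k - 1) → Fin n, ψ (ins5 hk i J) * ψ (ins5 hk j J))) 0 := by
  have hdetne : ∀ t, (g t).det ≠ 0 := fun t => (hgpos t).det_pos.ne'
  have hentry : ∀ i j, DifferentiableAt ℝ (fun t => g t i j) 0 :=
    fun i j => (hgderiv i j).differentiableAt
  have hdiff : ∀ i j, DifferentiableAt ℝ (fun t => (g t)⁻¹ i j) 0 :=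
    fun i j => inv_diffAt g hentry (hdetne 0) i j
  have hinv0 : (g 0)⁻¹ = 1 := by rw [hg0, inv_one]
  have hinvderiv : ∀ i j, HasDerivAt (fun t => (g t)⁻¹ i j) (-h i j) 0 := by
    intro i j
    have hd : ∀ a b, HasDerivAt (fun t => (g t)⁻¹ a b)
        (deriv (fun t => (g t)⁻¹ a b) 0) 0 :=
      fun a b => (hdiff a b).hasDerivAt
    have hF : HasDerivAt (fun t => ∑ l, g t i l * (g t)⁻¹ l j)
        (∑ l, (h i l * (g 0)⁻¹ l j + g 0 i l * deriv (fun t => (g t)⁻¹ l j) 0)) 0 :=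
      HasDerivAt.fun_sum fun l _ => (hgderiv i l).mul (hd l j)
    have hFeq : (fun t => ∑ l, g t i l * (g t)⁻¹ l j)
        = fun _ => (1 : Matrix (Fin n) (Fin n) ℝ) i j := by
      funext t
      have hmul := Matrix.mul_nonsing_inv (g t) ((hdetne t).isUnit)
      calc ∑ l, g t i l * (g t)⁻¹ l j = (g t * (g t)⁻¹) i j := (Matrix.mul_apply).symm
        _ = _ := by rw [hmul]
    have hzero : HasDerivAt (fun t => ∑ l, g t i l * (g t)⁻¹ l j) 0 0 := by
      rw [hFeq]; exact hasDerivAt_const _ _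
    have hsum0 := hF.unique hzero
    rw [hinv0, hg0] at hsum0
    simp only [Matrix.one_apply, mul_ite, ite_mul, mul_one, one_mul, mul_zero, zero_mul,
      Finset.sum_add_distrib, Finset.sum_ite_eq, Finset.sum_ite_eq', Finset.mem_univ,
      if_true] at hsum0
    have : deriv (fun t => (g t)⁻¹ i j) 0 = -h i j := by linarith
    exact this ▸ hd i j
  have hmain : HasDerivAt (fun t => innerG5 (g t) ψ)
      ((k.factorial : ℝ)⁻¹ * ∑ I : Fin k → Fin n, ∑ J : Fin k → Fin n, ψ I * ψ J *
        (∑ r : Fin k, (∏ s ∈ Finset.univ.erase r, (g 0)⁻¹ (I s) (J s)) •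
          (-h (I r) (J r)))) 0 := by
    unfold innerG5
    apply HasDerivAt.const_mul
    apply HasDerivAt.fun_sum
    intro I _
    apply HasDerivAt.fun_sum
    intro J _
    exact (HasDerivAt.fun_finsetProd fun r _ => hinvderiv (I r) (J r)).const_mul _
  rw [hinv0] at hmain
  simp only [smul_eq_mul] at hmain
  have halg := key_alg hk ψ halt h
  rw [← halg]
  exact hmain

end
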